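/- Let n ≥ 1, let a₁, …, aₙ and b₁, …, bₙ be probability measures on ℝ with finite second moment, and let x₁, …, xₙ ≥ 0 satisfy Δ(aᵢ)·Δ(bᵢ) ≥ xᵢ for every i. Then Δ(a₁ ⋆ ⋯ ⋆ aₙ)·Δ(b₁ ⋆ ⋯ ⋆ bₙ) ≥ x₁ + ⋯ + xₙ. (Iterated form of Proposition 1, used for the bounds 3/2 and 2 in the frame-relative uncertainty relations.) -/

import Mathlib

open MeasureTheory

/-- Mean of a measure on ℝ. -/
noncomputable def mMean (μ : Measure ℝ) : ℝ := ∫ x, x ∂μ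

/-- Variance Δ² of a measure on ℝ. -/
noncomputable def mVar (μ : Measure ℝ) : ℝ := ∫ x, (x - mMean μ) ^ 2 ∂μ

/-- Standard deviation Δ of a measure on ℝ. -/
noncomputable def mStd (μ : Measure ℝ) : ℝ := Real.sqrt (mVar μ)

/-- μ has finite second moment. -/
def FinSecondMoment (μ : Measure ℝ) : Prop := Integrable (fun x => x ^ 2) μ

/-- Convolution of two measures on ℝ: pushforward of the product under addition. -/
noncomputable def mConv (a b : Measure ℝ) : Measure ℝ :=
  Measure.map (fun p : ℝ × ℝ => p.1 + p.2) (a.prod b)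

/-- Iterated convolution a₁ ⋆ a₂ ⋆ ⋯ ⋆ aₙ of a (nonempty) family of measures on ℝ. -/
noncomputable def mConvFold : {n : ℕ} → (Fin (n + 1) → Measure ℝ) → Measure ℝ
  | 0, a => a 0
  | _ + 1, a => mConv (mConvFold (fun i => a i.castSucc)) (a (Fin.last _))

open ProbabilityTheory

lemma my_variance_map {α β : Type*} [MeasurableSpace α] [MeasurableSpace β]
    (μ : Measure α) (f : α → β) (g : β → ℝ) (hf : AEMeasurable f μ)
    (hg : AEStronglyMeasurable g (Measure.map f μ)) :
    variance g (Measure.map f μ) = variance (fun x => g (f x)) μ := by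
  unfold variance evariance
  rw [integral_map hf hg]
  congr 1
  exact lintegral_map'
    (((hg.aemeasurable.sub aemeasurable_const).aestronglyMeasurable.enorm).pow_const 2) hf

lemma memLp2 (μ : Measure ℝ) (h : FinSecondMoment μ) : MemLp (fun x : ℝ => x) 2 μ :=
  (memLp_two_iff_integrable_sq aestronglyMeasurable_id).2 h

lemma mVar_eq_variance (μ : Measure ℝ) [IsProbabilityMeasure μ] (h : FinSecondMoment μ) :
    mVar μ = variance (fun x : ℝ => x) μ := by
  rw [variance_eq_integral (memLp2 μ h).1.aemeasurable]
  rfl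

lemma addfun_meas : Measurable (fun p : ℝ × ℝ => p.1 + p.2) := measurable_fst.add measurable_snd

lemma mConv_prob (a b : Measure ℝ) [IsProbabilityMeasure a] [IsProbabilityMeasure b] :
    IsProbabilityMeasure (mConv a b) :=
  Measure.isProbabilityMeasure_map addfun_meas.aemeasurable

lemma memLp2_fst (a b : Measure ℝ) [IsProbabilityMeasure a] [IsProbabilityMeasure b]
    (ha : FinSecondMoment a) : MemLp (fun p : ℝ × ℝ => p.1) 2 (a.prod b) := by
  have h : Measure.map Prod.fst (a.prod b) = a := by
    simp [Measure.map_fst_prod]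
  have := (memLp_map_measure_iff (aestronglyMeasurable_id) measurable_fst.aemeasurable
    (μ := a.prod b) (p := 2)).1 (by rw [h]; exact memLp2 a ha)
  exact this

lemma memLp2_snd (a b : Measure ℝ) [IsProbabilityMeasure a] [IsProbabilityMeasure b]
    (hb : FinSecondMoment b) : MemLp (fun p : ℝ × ℝ => p.2) 2 (a.prod b) := by
  have h : Measure.map Prod.snd (a.prod b) = b := by
    simp [Measure.map_snd_prod]
  have := (memLp_map_measure_iff (aestronglyMeasurable_id) measurable_snd.aemeasurable
    (μ := a.prod b) (p := 2)).1 (by rw [h]; exact memLp2 b hb)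
  exact this

lemma mConv_fsm (a b : Measure ℝ) [IsProbabilityMeasure a] [IsProbabilityMeasure b]
    (ha : FinSecondMoment a) (hb : FinSecondMoment b) : FinSecondMoment (mConv a b) := by
  have hsum : MemLp (fun p : ℝ × ℝ => p.1 + p.2) 2 (a.prod b) :=
    (memLp2_fst a b ha).add (memLp2_snd a b hb)
  have : MemLp (fun x : ℝ => x) 2 (mConv a b) := by
    rw [mConv]
    exact (memLp_map_measure_iff aestronglyMeasurable_id addfun_meas.aemeasurable).2 hsum
  exact (memLp_two_iff_integrable_sq aestronglyMeasurable_id).1 this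

lemma mVar_conv (a b : Measure ℝ) [IsProbabilityMeasure a] [IsProbabilityMeasure b]
    (ha : FinSecondMoment a) (hb : FinSecondMoment b) :
    mVar (mConv a b) = mVar a + mVar b := by
  have : IsProbabilityMeasure (mConv a b) := mConv_prob a b
  rw [mVar_eq_variance _ (mConv_fsm a b ha hb), mVar_eq_variance a ha, mVar_eq_variance b hb]
  have hmapf : Measure.map Prod.fst (a.prod b) = a := by simp [Measure.map_fst_prod]
  have hmaps : Measure.map Prod.snd (a.prod b) = b := by simp [Measure.map_snd_prod]
  have h1 : variance (fun x : ℝ => x) (mConv a b)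
      = variance (fun p : ℝ × ℝ => p.1 + p.2) (a.prod b) := by
    rw [mConv, my_variance_map _ _ (fun x : ℝ => x) addfun_meas.aemeasurable measurable_id'.aestronglyMeasurable]
  have hfst : variance (fun x : ℝ => x) a = variance (fun p : ℝ × ℝ => p.1) (a.prod b) := by
    conv_lhs => rw [← hmapf]
    exact my_variance_map _ _ (fun x : ℝ => x) measurable_fst.aemeasurable
      (by rw [hmapf]; exact measurable_id'.aestronglyMeasurable)
  have hsnd : variance (fun x : ℝ => x) b = variance (fun p : ℝ × ℝ => p.2) (a.prod b) := by
    conv_lhs => rw [← hmaps]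
    exact my_variance_map _ _ (fun x : ℝ => x) measurable_snd.aemeasurable
      (by rw [hmaps]; exact measurable_id'.aestronglyMeasurable)
  have hindep : IndepFun (fun p : ℝ × ℝ => p.1) (fun p : ℝ × ℝ => p.2) (a.prod b) := by
    rw [indepFun_iff_map_prod_eq_prod_map_map measurable_fst.aemeasurable
      measurable_snd.aemeasurable]
    rw [hmapf, hmaps]
    simp
  rw [h1, hfst, hsnd]
  exact hindep.variance_add (memLp2_fst a b ha) (memLp2_snd a b hb)

lemma fold_all (n : ℕ) (a : Fin (n + 1) → Measure ℝ)
    (hap : ∀ i, IsProbabilityMeasure (a i)) (ha : ∀ i, FinSecondMoment (a i)) :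
    IsProbabilityMeasure (mConvFold a) ∧ FinSecondMoment (mConvFold a) ∧
      mVar (mConvFold a) = ∑ i, mVar (a i) := by
  induction n with
  | zero => exact ⟨hap 0, ha 0, by simp [mConvFold]⟩
  | succ m ih =>
    obtain ⟨hp, hf, hv⟩ := ih (fun i => a i.castSucc) (fun i => hap _) (fun i => ha _)
    have hpl := hap (Fin.last _)
    have hfl := ha (Fin.last (m + 1))
    refine ⟨mConv_prob _ _, mConv_fsm _ _ hf hfl, ?_⟩
    show mVar (mConv _ _) = _
    rw [mVar_conv _ _ hf hfl, hv]
    exact (Fin.sum_univ_castSucc fun i => mVar (a i)).symm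

lemma mVar_nonneg (μ : Measure ℝ) : 0 ≤ mVar μ :=
  integral_nonneg fun x => sq_nonneg _

/-- Iterated form of Proposition 1: if Δ(aᵢ)Δ(bᵢ) ≥ xᵢ for each i, then
Δ(a₁ ⋆ ⋯ ⋆ aₙ)·Δ(b₁ ⋆ ⋯ ⋆ bₙ) ≥ x₁ + ⋯ + xₙ. -/
theorem stmt2 (n : ℕ) (a b : Fin (n + 1) → Measure ℝ)
    (hap : ∀ i, IsProbabilityMeasure (a i)) (hbp : ∀ i, IsProbabilityMeasure (b i))
    (ha : ∀ i, FinSecondMoment (a i)) (hb : ∀ i, FinSecondMoment (b i))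
    (x : Fin (n + 1) → ℝ) (hx : ∀ i, 0 ≤ x i)
    (hab : ∀ i, mStd (a i) * mStd (b i) ≥ x i) :
    mStd (mConvFold a) * mStd (mConvFold b) ≥ ∑ i, x i := by
  obtain ⟨-, -, hva⟩ := fold_all n a hap ha
  obtain ⟨-, -, hvb⟩ := fold_all n b hbp hb
  have key : ∑ i, x i ≤ ∑ i, mStd (a i) * mStd (b i) :=
    Finset.sum_le_sum fun i _ => hab i
  have cs : (∑ i, mStd (a i) * mStd (b i)) ^ 2
      ≤ (∑ i, mStd (a i) ^ 2) * ∑ i, mStd (b i) ^ 2 :=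
    Finset.sum_mul_sq_le_sq_mul_sq _ _ _
  have hsq : ∀ μ : Measure ℝ, mStd μ ^ 2 = mVar μ := fun μ =>
    Real.sq_sqrt (mVar_nonneg μ)
  have hnn : 0 ≤ ∑ i, mStd (a i) * mStd (b i) :=
    Finset.sum_nonneg fun i _ => mul_nonneg (Real.sqrt_nonneg _) (Real.sqrt_nonneg _)
  have h2 : ∑ i, mStd (a i) * mStd (b i) ≤ mStd (mConvFold a) * mStd (mConvFold b) := by
    rw [show mStd (mConvFold a) * mStd (mConvFold b)
        = Real.sqrt (mVar (mConvFold a) * mVar (mConvFold b)) by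
      rw [mStd, mStd, Real.sqrt_mul (mVar_nonneg _)]]
    rw [hva, hvb]
    refine (Real.le_sqrt hnn (mul_nonneg (Finset.sum_nonneg fun i _ => mVar_nonneg _)
      (Finset.sum_nonneg fun i _ => mVar_nonneg _))).2 ?_
    simpa [hsq] using cs
  linarith
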